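/- arXiv:1811.01177 — 9 statements merged into one kernel-verified Lean document; each statement's English description precedes it below -/
import Mathlib

section
/- Let P be an arbitrary subset of the Euclidean plane ℝ², let t > 0, and let w be a real number with 0 < w ≤ √2·t. If a finite set G ⊆ ℝ² guards P, then there exists a finite set G' contained in the grid wℤ² with |G'| ≤ |G| such that G' guards the Minkowski inflation P + closedBall(0, t). -/
open Pointwise

/-- A set of guards `G` guards a region `P` if every point of `P` is seen by some guard,
i.e. the closed segment from the guard to the point lies inside `P`. -/
def Guards (G P : Set (EuclideanSpace ℝ (Fin 2))) : Prop :=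
  ∀ p ∈ P, ∃ g ∈ G, segment ℝ g p ⊆ P

/-- The grid of width `w` in the Euclidean plane. -/
def grid (w : ℝ) : Set (EuclideanSpace ℝ (Fin 2)) :=
  {x | ∃ a b : ℤ, x 0 = w * a ∧ x 1 = w * b}

theorem minkowski_inflation_grid_guards
    (P : Set (EuclideanSpace ℝ (Fin 2))) (t w : ℝ) (ht : 0 < t)
    (hw0 : 0 < w) (hw : w ≤ Real.sqrt 2 * t)
    (G : Set (EuclideanSpace ℝ (Fin 2))) (hGfin : G.Finite) (hG : Guards G P) :
    ∃ G' : Set (EuclideanSpace ℝ (Fin 2)), G'.Finite ∧ G' ⊆ grid w ∧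
      Nat.card G' ≤ Nat.card G ∧
      Guards G' (P + Metric.closedBall (0 : EuclideanSpace ℝ (Fin 2)) t) := by
  classical
  set f : EuclideanSpace ℝ (Fin 2) → EuclideanSpace ℝ (Fin 2) :=
    fun g => (WithLp.equiv 2 (Fin 2 → ℝ)).symm
      ![w * (round (g 0 / w) : ℤ), w * (round (g 1 / w) : ℤ)] with hf
  have hcoord : ∀ (g : EuclideanSpace ℝ (Fin 2)) (i : Fin 2),
      |f g i - g i| ≤ w / 2 := by
    intro g i
    have key : ∀ x : ℝ, |w * (round (x / w) : ℤ) - x| ≤ w / 2 := by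
      intro x
      have h : |(round (x / w) : ℝ) - x / w| ≤ 1 / 2 := by
        rw [abs_sub_comm]; exact abs_sub_round (x / w)
      have : |w * ((round (x / w) : ℝ) - x / w)| ≤ w / 2 := by
        rw [abs_mul, abs_of_pos hw0]
        calc w * |(round (x / w) : ℝ) - x / w| ≤ w * (1 / 2) := by
              exact mul_le_mul_of_nonneg_left h hw0.le
          _ = w / 2 := by ring
      calc |w * (round (x / w) : ℤ) - x| = |w * ((round (x / w) : ℝ) - x / w)| := by
            rw [mul_sub]
            congr 2
            field_simp
        _ ≤ w / 2 := this
    fin_cases i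
    · exact key (g 0)
    · exact key (g 1)
  have hw2 : w ^ 2 ≤ 2 * t ^ 2 := by
    have h2 : Real.sqrt 2 ^ 2 = 2 := Real.sq_sqrt (by norm_num)
    nlinarith [Real.sqrt_nonneg 2]
  have hdist : ∀ g : EuclideanSpace ℝ (Fin 2), ‖f g - g‖ ≤ t := by
    intro g
    rw [EuclideanSpace.norm_eq]
    rw [show Real.sqrt (∑ i, ‖(f g - g) i‖ ^ 2) =
        Real.sqrt (‖(f g - g) 0‖ ^ 2 + ‖(f g - g) 1‖ ^ 2) by rw [Fin.sum_univ_two]]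
    have h0 : |f g 0 - g 0| ≤ w / 2 := hcoord g 0
    have h1 : |f g 1 - g 1| ≤ w / 2 := hcoord g 1
    have e0 : (f g - g) 0 = f g 0 - g 0 := rfl
    have e1 : (f g - g) 1 = f g 1 - g 1 := rfl
    have hle : ‖(f g - g) 0‖ ^ 2 + ‖(f g - g) 1‖ ^ 2 ≤ t ^ 2 := by
      rw [e0, e1, Real.norm_eq_abs, Real.norm_eq_abs]
      nlinarith [abs_nonneg (f g 0 - g 0), abs_nonneg (f g 1 - g 1),
        sq_abs (f g 0 - g 0), sq_abs (f g 1 - g 1)]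
    calc Real.sqrt (‖(f g - g) 0‖ ^ 2 + ‖(f g - g) 1‖ ^ 2)
        ≤ Real.sqrt (t ^ 2) := Real.sqrt_le_sqrt hle
      _ = t := Real.sqrt_sq ht.le
  refine ⟨f '' G, hGfin.image f, ?_, ?_, ?_⟩
  · rintro _ ⟨g, -, rfl⟩
    exact ⟨round (g 0 / w), round (g 1 / w), rfl, rfl⟩
  · exact Nat.card_image_le hGfin
  · rintro q hq
    rw [Set.mem_add] at hq
    obtain ⟨p, hp, v, hv, rfl⟩ := hq
    obtain ⟨g, hg, hseg⟩ := hG p hp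
    refine ⟨f g, Set.mem_image_of_mem f hg, ?_⟩
    rintro x ⟨a, b, ha, hb, hab, rfl⟩
    rw [Set.mem_add]
    refine ⟨a • g + b • p, hseg ⟨a, b, ha, hb, hab, rfl⟩,
      a • (f g - g) + b • v, ?_, by module⟩
    rw [Metric.mem_closedBall, dist_zero_right]
    have hvn : ‖v‖ ≤ t := by
      rwa [Metric.mem_closedBall, dist_zero_right] at hv
    calc ‖a • (f g - g) + b • v‖ ≤ ‖a • (f g - g)‖ + ‖b • v‖ := norm_add_le _ _
      _ = a * ‖f g - g‖ + b * ‖v‖ := by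
          rw [norm_smul, norm_smul, Real.norm_of_nonneg ha, Real.norm_of_nonneg hb]
      _ ≤ a * t + b * t := by
          have := hdist g
          nlinarith
      _ = t := by rw [← add_mul, hab, one_mul]
end

section
/- Let P be an arbitrary subset of the Euclidean plane ℝ² and let 0 ≤ s ≤ t. If a finite set G ⊆ ℝ² guards the Minkowski inflation P + closedBall(0, s), then there exists a finite set G' ⊆ ℝ² with |G'| ≤ |G| that guards the Minkowski inflation P + closedBall(0, t). Consequently, the minimum number of guards needed for P + closedBall(0, t) is a monotonically decreasing function of t. -/
open Pointwise

theorem guard_number_monotone_under_inflation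
    (P : Set (EuclideanSpace ℝ (Fin 2))) (s t : ℝ) (hs : 0 ≤ s) (hst : s ≤ t)
    (G : Set (EuclideanSpace ℝ (Fin 2))) (hGfin : G.Finite)
    (hG : Guards G (P + Metric.closedBall (0 : EuclideanSpace ℝ (Fin 2)) s)) :
    ∃ G' : Set (EuclideanSpace ℝ (Fin 2)), G'.Finite ∧
      Nat.card G' ≤ Nat.card G ∧
      Guards G' (P + Metric.closedBall (0 : EuclideanSpace ℝ (Fin 2)) t) := by
  refine ⟨G, hGfin, le_rfl, ?_⟩
  have hball : Metric.closedBall (0 : EuclideanSpace ℝ (Fin 2)) s +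
      Metric.closedBall (0 : EuclideanSpace ℝ (Fin 2)) (t - s) =
      Metric.closedBall (0 : EuclideanSpace ℝ (Fin 2)) t := by
    rw [closedBall_add_closedBall hs (by linarith), add_zero, add_sub_cancel]
  have hPt : P + Metric.closedBall (0 : EuclideanSpace ℝ (Fin 2)) t =
      (P + Metric.closedBall (0 : EuclideanSpace ℝ (Fin 2)) s) +
      Metric.closedBall (0 : EuclideanSpace ℝ (Fin 2)) (t - s) := by
    rw [add_assoc, hball]
  rw [hPt]
  intro p hp
  obtain ⟨q, hq, w, hw, rfl⟩ := hp
  obtain ⟨g, hg, hseg⟩ := hG q hq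
  refine ⟨g, hg, ?_⟩
  rintro y ⟨a, b, ha, hb, hab, rfl⟩
  have h1 : a • g + b • q ∈ P + Metric.closedBall (0 : EuclideanSpace ℝ (Fin 2)) s :=
    hseg ⟨a, b, ha, hb, hab, rfl⟩
  have h2 : b • w ∈ Metric.closedBall (0 : EuclideanSpace ℝ (Fin 2)) (t - s) := by
    rw [Metric.mem_closedBall, dist_zero_right] at hw ⊢
    calc ‖b • w‖ = b * ‖w‖ := by rw [norm_smul, Real.norm_of_nonneg hb]
      _ ≤ 1 * (t - s) := by
        apply mul_le_mul (by linarith) hw (norm_nonneg _) zero_le_one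
      _ = t - s := one_mul _
  have : a • g + b • (q + w) = (a • g + b • q) + b • w := by
    rw [smul_add]; abel
  rw [this]
  exact ⟨_, h1, _, h2, rfl⟩
end

section
/- Let P be an arbitrary subset of the Euclidean plane ℝ², let 0 ≤ s < t, and let k be a natural number. Suppose some finite set of size k guards P + closedBall(0, s), and every finite set guarding P + closedBall(0, t) has size at least k. Then there exists a set G' of size exactly k, contained in the grid wℤ² with w = √2·(t − s), such that G' guards P + closedBall(0, t); in particular, the grid of width √2·(t − s) contains a minimum-cardinality guard set of P + closedBall(0, t). -/
open Pointwise

theorem grid_contains_optimal_guard_set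
    (P : Set (EuclideanSpace ℝ (Fin 2))) (s t : ℝ) (hs : 0 ≤ s) (hst : s < t) (k : ℕ)
    (hexists : ∃ G : Set (EuclideanSpace ℝ (Fin 2)), G.Finite ∧ Nat.card G = k ∧
      Guards G (P + Metric.closedBall (0 : EuclideanSpace ℝ (Fin 2)) s))
    (hopt : ∀ G : Set (EuclideanSpace ℝ (Fin 2)), G.Finite →
      Guards G (P + Metric.closedBall (0 : EuclideanSpace ℝ (Fin 2)) t) → k ≤ Nat.card G) :
    ∃ G' : Set (EuclideanSpace ℝ (Fin 2)), G'.Finite ∧ Nat.card G' = k ∧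
      G' ⊆ grid (Real.sqrt 2 * (t - s)) ∧
      Guards G' (P + Metric.closedBall (0 : EuclideanSpace ℝ (Fin 2)) t) := by
  obtain ⟨G, hGfin, hGcard, hG⟩ := hexists
  set w : ℝ := Real.sqrt 2 * (t - s) with hw
  have hts : 0 < t - s := sub_pos.2 hst
  have ht : 0 < t := lt_of_le_of_lt hs hst
  have hw0 : 0 < w := mul_pos (Real.sqrt_pos.2 two_pos) hts
  set r : EuclideanSpace ℝ (Fin 2) → EuclideanSpace ℝ (Fin 2) :=
    fun x => WithLp.toLp 2 (fun i => w * round (x i / w) : Fin 2 → ℝ) with hr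
  have hrg : ∀ x, r x ∈ grid w := fun x => ⟨round (x 0 / w), round (x 1 / w), rfl, rfl⟩
  have hrdist : ∀ x, ‖r x - x‖ ≤ t - s := by
    intro x
    have key : ∀ i : Fin 2, |r x i - x i| ≤ w / 2 := by
      intro i
      have h1 : r x i - x i = w * (round (x i / w) - x i / w) := by
        show w * round (x i / w) - x i = _
        field_simp
      rw [h1, abs_mul, abs_of_pos hw0, abs_sub_comm]
      have h2 := abs_sub_round (x i / w)
      nlinarith
    have hnorm : ‖r x - x‖ = Real.sqrt (∑ i : Fin 2, (r x i - x i) ^ 2) := by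
      rw [EuclideanSpace.norm_eq]
      congr 1
      refine Finset.sum_congr rfl fun i _ => ?_
      have : (r x - x) i = r x i - x i := rfl
      rw [this, Real.norm_eq_abs, sq_abs]
    rw [hnorm]
    have hsum : (∑ i : Fin 2, (r x i - x i) ^ 2) ≤ (t - s) ^ 2 := by
      have hsq : ∀ i : Fin 2, (r x i - x i) ^ 2 ≤ (w / 2) ^ 2 := by
        intro i
        have := key i
        nlinarith [abs_nonneg (r x i - x i), sq_abs (r x i - x i)]
      have h2 : (∑ i : Fin 2, (r x i - x i) ^ 2) ≤ 2 * (w / 2) ^ 2 := by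
        rw [Fin.sum_univ_two]
        nlinarith [hsq 0, hsq 1]
      have hw2 : w ^ 2 = 2 * (t - s) ^ 2 := by
        rw [hw, mul_pow, Real.sq_sqrt (by norm_num : (2:ℝ) ≥ 0)]
      nlinarith
    calc Real.sqrt (∑ i : Fin 2, (r x i - x i) ^ 2) ≤ Real.sqrt ((t - s) ^ 2) :=
          Real.sqrt_le_sqrt hsum
      _ = t - s := Real.sqrt_sq hts.le
  -- the rounded guard set
  have hguard : Guards (r '' G) (P + Metric.closedBall (0 : EuclideanSpace ℝ (Fin 2)) t) := by
    rintro p hp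
    obtain ⟨q, hq, v, hv, rfl⟩ := Set.mem_add.1 hp
    rw [Metric.mem_closedBall, dist_zero_right] at hv
    set p' : EuclideanSpace ℝ (Fin 2) := q + (s / t) • v with hp'def
    have hst' : 0 ≤ s / t := div_nonneg hs ht.le
    have hp' : p' ∈ P + Metric.closedBall (0 : EuclideanSpace ℝ (Fin 2)) s := by
      refine Set.add_mem_add hq ?_
      rw [Metric.mem_closedBall, dist_zero_right, norm_smul, Real.norm_eq_abs,
        abs_of_nonneg hst']
      calc s / t * ‖v‖ ≤ s / t * t := by
            exact mul_le_mul_of_nonneg_left hv hst'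
        _ = s := by field_simp
    obtain ⟨g, hgG, hseg⟩ := hG p' hp'
    refine ⟨r g, ⟨g, hgG, rfl⟩, ?_⟩
    rintro x hx
    obtain ⟨a, b, ha, hb, hab, rfl⟩ := hx
    have hy : a • g + b • p' ∈ P + Metric.closedBall (0 : EuclideanSpace ℝ (Fin 2)) s :=
      hseg ⟨a, b, ha, hb, hab, rfl⟩
    obtain ⟨q', hq', u, hu, hyeq⟩ := Set.mem_add.1 hy
    rw [Metric.mem_closedBall, dist_zero_right] at hu
    have hdelta : ‖a • (r g - g) + b • ((q + v) - p')‖ ≤ t - s := by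
      have h1 : ‖r g - g‖ ≤ t - s := hrdist g
      have h2 : ‖(q + v) - p'‖ ≤ t - s := by
        have heq : (q + v) - p' = (1 - s / t) • v := by
          rw [hp'def]
          module
        rw [heq, norm_smul, Real.norm_eq_abs, abs_of_nonneg (by
          rw [sub_nonneg]; exact div_le_one_of_le₀ hst.le ht.le)]
        calc (1 - s / t) * ‖v‖ ≤ (1 - s / t) * t := by
              refine mul_le_mul_of_nonneg_left hv ?_
              rw [sub_nonneg]; exact div_le_one_of_le₀ hst.le ht.le
          _ = t - s := by field_simp
      calc ‖a • (r g - g) + b • ((q + v) - p')‖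
          ≤ ‖a • (r g - g)‖ + ‖b • ((q + v) - p')‖ := norm_add_le _ _
        _ = a * ‖r g - g‖ + b * ‖(q + v) - p'‖ := by
            rw [norm_smul, norm_smul, Real.norm_eq_abs, Real.norm_eq_abs,
              abs_of_nonneg ha, abs_of_nonneg hb]
        _ ≤ a * (t - s) + b * (t - s) := by
            exact add_le_add (mul_le_mul_of_nonneg_left h1 ha)
              (mul_le_mul_of_nonneg_left h2 hb)
        _ = t - s := by nlinarith
    have hxeq : a • (r g) + b • (q + v) =
        q' + (u + (a • (r g - g) + b • ((q + v) - p'))) := by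
      rw [show a • (r g) + b • (q + v) =
          (a • g + b • p') + (a • (r g - g) + b • ((q + v) - p')) from by module,
        ← hyeq, add_assoc]
    rw [hxeq]
    refine Set.add_mem_add hq' ?_
    rw [Metric.mem_closedBall, dist_zero_right]
    calc ‖u + (a • (r g - g) + b • ((q + v) - p'))‖
        ≤ ‖u‖ + ‖a • (r g - g) + b • ((q + v) - p')‖ := norm_add_le _ _
      _ ≤ s + (t - s) := add_le_add hu hdelta
      _ = t := by ring
  refine ⟨r '' G, hGfin.image r, ?_, ?_, hguard⟩
  · refine le_antisymm ?_ (hopt _ (hGfin.image r) hguard)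
    calc Nat.card (r '' G : Set _) ≤ Nat.card G := Nat.card_image_le hGfin
      _ = k := hGcard
  · rintro x ⟨g, _, rfl⟩; exact hrg g
end

section
/- Let ℓ ≥ 1 be a natural number, let L > 0, and let δ₁, …, δ_ℓ be positive real numbers with sum δ such that δᵢ ≤ L/e for every i (where e is Euler's number). Then Σ_{i=1}^{ℓ} δᵢ·(log(L/δᵢ))² ≤ δ·(log(L·ℓ/δ))², where log denotes the natural logarithm. -/
open Real

private lemma key_nonneg {t : ℝ} (ht : 0 ≤ t) : t ^ 2 ≤ 2 * (Real.exp t - 1 - t) := by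
  have := Real.quadratic_le_exp_of_nonneg ht
  nlinarith

private lemma key_nonpos {t : ℝ} (ht : t ≤ 0) :
    t ^ 2 ≤ 2 * (1 - t) * (Real.exp t - 1 - t) := by
  set h : ℝ → ℝ := fun t => 2 * (1 - t) * (Real.exp t - 1 - t) - t ^ 2 with hh
  have hderiv : ∀ x : ℝ, HasDerivAt h (2 * x * (1 - Real.exp x)) x := by
    intro x
    have h1 : HasDerivAt (fun t : ℝ => 2 * (1 - t)) (-2) x := by
      simpa using ((hasDerivAt_id x).const_sub 1).const_mul 2
    have h2 : HasDerivAt (fun t : ℝ => Real.exp t - 1 - t) (Real.exp x - 1) x := by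
      exact ((Real.hasDerivAt_exp x).sub_const 1).sub (hasDerivAt_id' x)
    have h3 : HasDerivAt (fun t : ℝ => t ^ 2) (2 * x) x := by
      simpa using hasDerivAt_pow 2 x
    have := (h1.mul h2).sub h3
    exact this.congr_deriv (by ring)
  have hanti : AntitoneOn h (Set.Iic 0) := by
    apply antitoneOn_of_deriv_nonpos (convex_Iic 0)
    · exact (Continuous.continuousOn (by fun_prop))
    · intro x hx
      exact (hderiv x).differentiableAt.differentiableWithinAt
    · intro x hx
      rw [(hderiv x).deriv]
      simp only [interior_Iic, Set.mem_Iio] at hx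
      have : 1 - Real.exp x > 0 := by
        have := Real.exp_lt_one_iff.mpr hx
        linarith
      nlinarith
  have := hanti ht Set.self_mem_Iic ht
  simp only [hh, Real.exp_zero] at this
  nlinarith [this]

private lemma key_ineq {u v : ℝ} (hu : 1 ≤ u) (hv : 1 ≤ v) :
    (u - v) ^ 2 ≤ 2 * v * (Real.exp (u - v) - 1 - (u - v)) := by
  set t := u - v with htdef
  rcases le_or_gt 0 t with ht | ht
  · have h1 := key_nonneg ht
    have h2 : 0 ≤ Real.exp t - 1 - t := by nlinarith [Real.add_one_le_exp t]
    nlinarith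
  · have h1 := key_nonpos ht.le
    have h2 : 0 ≤ Real.exp t - 1 - t := by nlinarith [Real.add_one_le_exp t]
    have hv' : 1 - t ≤ v := by simp only [htdef]; linarith
    nlinarith

/-- Tangent line inequality for f(x) = x (log(L/x))² at point m. -/
private lemma tangent_line {L x m : ℝ} (hL : 0 < L) (hx : 0 < x) (hm : 0 < m)
    (hxL : x ≤ L / Real.exp 1) (hmL : m ≤ L / Real.exp 1) :
    x * (Real.log (L / x)) ^ 2 ≤
      m * (Real.log (L / m)) ^ 2 +
        ((Real.log (L / m)) ^ 2 - 2 * Real.log (L / m)) * (x - m) := by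
  set u := Real.log (L / x) with hu
  set v := Real.log (L / m) with hv
  have hepos := Real.exp_pos 1
  have hu1 : 1 ≤ u := by
    rw [hu]
    have : Real.exp 1 ≤ L / x := by
      rw [le_div_iff₀ hx]
      calc Real.exp 1 * x ≤ Real.exp 1 * (L / Real.exp 1) := by
            exact mul_le_mul_of_nonneg_left hxL hepos.le
        _ = L := by field_simp
    calc (1:ℝ) = Real.log (Real.exp 1) := (Real.log_exp 1).symm
      _ ≤ Real.log (L / x) := Real.log_le_log (Real.exp_pos 1) this
  have hv1 : 1 ≤ v := by
    rw [hv]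
    have : Real.exp 1 ≤ L / m := by
      rw [le_div_iff₀ hm]
      calc Real.exp 1 * m ≤ Real.exp 1 * (L / Real.exp 1) := by
            exact mul_le_mul_of_nonneg_left hmL hepos.le
        _ = L := by field_simp
    calc (1:ℝ) = Real.log (Real.exp 1) := (Real.log_exp 1).symm
      _ ≤ Real.log (L / m) := Real.log_le_log (Real.exp_pos 1) this
  have hxeq : x = L * Real.exp (-u) := by
    rw [hu, Real.exp_neg, Real.exp_log (div_pos hL hx)]
    field_simp
  have hmeq : m = L * Real.exp (-v) := by
    rw [hv, Real.exp_neg, Real.exp_log (div_pos hL hm)]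
    field_simp
  have hkey := key_ineq hu1 hv1
  -- inequality ⟺ u² - v² + 2v ≤ 2v e^{u-v}
  have hmain : u ^ 2 - v ^ 2 + 2 * v ≤ 2 * v * Real.exp (u - v) := by nlinarith
  -- multiply by x = L e^{-u} > 0
  have hexp : Real.exp (-u) * Real.exp (u - v) = Real.exp (-v) := by
    rw [← Real.exp_add]; ring_nf
  have hEu : (0:ℝ) < Real.exp (-u) := Real.exp_pos _
  calc x * u ^ 2 = L * Real.exp (-u) * u ^ 2 := by rw [← hxeq]
    _ ≤ L * Real.exp (-u) * (v ^ 2 - 2 * v) + L * Real.exp (-v) * (2 * v) := by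
        have h1 : Real.exp (-u) * (u ^ 2 - v ^ 2 + 2 * v) ≤
            Real.exp (-u) * (2 * v * Real.exp (u - v)) :=
          mul_le_mul_of_nonneg_left hmain hEu.le
        have h2 : Real.exp (-u) * (2 * v * Real.exp (u - v)) = Real.exp (-v) * (2 * v) := by
          linear_combination (2 * v) * hexp
        nlinarith [h1, h2, hL.le]
    _ = m * v ^ 2 + (v ^ 2 - 2 * v) * (x - m) := by
        rw [hxeq, hmeq]; ring

theorem sum_xlogsq_concave_max (ℓ : ℕ) (hℓ : 1 ≤ ℓ) (L : ℝ) (hL : 0 < L)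
    (d : Fin ℓ → ℝ) (hd : ∀ i, 0 < d i) (hdL : ∀ i, d i ≤ L / Real.exp 1)
    (δ : ℝ) (hsum : ∑ i, d i = δ) :
    ∑ i, d i * (Real.log (L / d i)) ^ 2 ≤ δ * (Real.log (L * ℓ / δ)) ^ 2 := by
  have hℓpos : (0:ℝ) < ℓ := by exact_mod_cast hℓ
  have hδpos : 0 < δ := by
    rw [← hsum]
    exact Finset.sum_pos (fun i _ => hd i) ⟨⟨0, hℓ⟩, Finset.mem_univ _⟩
  set m := δ / ℓ with hm
  have hmpos : 0 < m := div_pos hδpos hℓpos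
  have hmL : m ≤ L / Real.exp 1 := by
    have hδle : δ ≤ ℓ * (L / Real.exp 1) := by
      rw [← hsum]
      calc ∑ i, d i ≤ ∑ _i : Fin ℓ, (L / Real.exp 1) := Finset.sum_le_sum (fun i _ => hdL i)
        _ = ℓ * (L / Real.exp 1) := by simp [mul_comm]
    rw [hm, div_le_iff₀ hℓpos]
    linarith [hδle, mul_comm (ℓ:ℝ) (L / Real.exp 1)]
  have hlogeq : Real.log (L / m) = Real.log (L * ℓ / δ) := by
    congr 1
    rw [hm]
    field_simp
  have step : ∀ i : Fin ℓ, d i * (Real.log (L / d i)) ^ 2 ≤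
      m * (Real.log (L / m)) ^ 2 +
        ((Real.log (L / m)) ^ 2 - 2 * Real.log (L / m)) * (d i - m) :=
    fun i => tangent_line hL (hd i) hmpos (hdL i) hmL
  calc ∑ i, d i * (Real.log (L / d i)) ^ 2
      ≤ ∑ i : Fin ℓ, (m * (Real.log (L / m)) ^ 2 +
          ((Real.log (L / m)) ^ 2 - 2 * Real.log (L / m)) * (d i - m)) :=
        Finset.sum_le_sum (fun i _ => step i)
    _ = ℓ * (m * (Real.log (L / m)) ^ 2) +
          ((Real.log (L / m)) ^ 2 - 2 * Real.log (L / m)) * (δ - ℓ * m) := by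
        simp only [Finset.sum_add_distrib, ← Finset.mul_sum, Finset.sum_sub_distrib, hsum,
          Finset.sum_const, Finset.card_univ, Fintype.card_fin, nsmul_eq_mul]
        ring
    _ = δ * (Real.log (L * ℓ / δ)) ^ 2 := by
        rw [hlogeq, hm]
        field_simp
        ring
end

section
/- Let ℓ ≥ 1 be a natural number, let L > 0 and δ > 0, and let 0 = t₀ ≤ t₁ ≤ … ≤ t_ℓ = δ be real numbers. Then (1/δ)·Σ_{i=1}^{ℓ} ∫_{t_{i−1}}^{t_i} log(L/(s − t_{i−1})) ds ≤ 1 + log(L·ℓ/δ), where log denotes the natural logarithm and each integral is over s ∈ (t_{i−1}, t_i]. -/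
open MeasureTheory intervalIntegral Real

lemma log_intervalIntegrable {d : ℝ} (hd : 0 ≤ d) :
    IntervalIntegrable Real.log volume 0 d := by
  rw [intervalIntegrable_iff_integrableOn_Ioc_of_le hd]
  have hg : IntegrableOn (fun x : ℝ => 2 * x ^ (-(1:ℝ)/2) + x) (Set.Ioc 0 d) volume := by
    rw [← intervalIntegrable_iff_integrableOn_Ioc_of_le hd]
    exact ((intervalIntegral.intervalIntegrable_rpow' (by norm_num)).const_mul 2).add
      (continuous_id.intervalIntegrable 0 d)
  refine Integrable.mono' hg Real.measurable_log.aestronglyMeasurable ?_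
  filter_upwards [ae_restrict_mem measurableSet_Ioc] with x hx
  have hx0 : 0 < x := hx.1
  have h1 : Real.log x ≤ x := by
    have := Real.log_le_sub_one_of_pos hx0; linarith
  have h2 : -Real.log x ≤ 2 * x ^ (-(1:ℝ)/2) := by
    have hp : (0:ℝ) < x ^ (-(1:ℝ)/2) := Real.rpow_pos_of_pos hx0 _
    have := Real.log_le_sub_one_of_pos hp
    have hlog : Real.log (x ^ (-(1:ℝ)/2)) = (-(1:ℝ)/2) * Real.log x :=
      Real.log_rpow hx0 _
    rw [hlog] at this
    linarith
  have hp : (0:ℝ) ≤ x ^ (-(1:ℝ)/2) := (Real.rpow_pos_of_pos hx0 _).le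
  rw [Real.norm_eq_abs, abs_le]
  constructor <;> nlinarith

lemma integral_log_zero {d : ℝ} (hd : 0 ≤ d) :
    ∫ x in (0:ℝ)..d, Real.log x = d * Real.log d - d := by
  have := intervalIntegral.integral_eq_sub_of_hasDerivAt_of_le hd
    (f := fun x => x * Real.log x - x) (f' := Real.log)
    ((Real.continuous_mul_log.sub continuous_id).continuousOn)
    (fun x hx => by
      have h := (Real.hasDerivAt_mul_log hx.1.ne').sub (hasDerivAt_id x)
      simp only [add_sub_cancel_right] at h
      exact h)
    (log_intervalIntegrable hd)
  simpa using this

set_option maxHeartbeats 1000000 in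
lemma ioc_integral_eq {a b L : ℝ} (hab : a ≤ b) (hL : 0 < L) :
    ∫ s in Set.Ioc a b, Real.log (L / (s - a)) =
      (b - a) * (1 + Real.log L - Real.log (b - a)) := by
  have e1 : ∫ s in Set.Ioc a b, Real.log (L / (s - a)) = ∫ s in a..b, Real.log (L / (s - a)) :=
    (intervalIntegral.integral_of_le hab).symm
  rw [e1]
  have h1 : ∫ s in a..b, Real.log (L / (s - a)) =
      ∫ s in (a-a)..(b-a), Real.log (L / s) :=
    by rw [intervalIntegral.integral_comp_sub_right (fun s => Real.log (L / s)) a]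
  rw [h1, sub_self]
  set d := b - a with hd
  have hd0 : 0 ≤ d := by simp [hd]; linarith
  have h2 : ∫ s in (0:ℝ)..d, Real.log (L / s) = ∫ s in (0:ℝ)..d, (Real.log L - Real.log s) := by
    apply intervalIntegral.integral_congr_ae
    filter_upwards [measure_eq_zero_iff_ae_notMem.mp (measure_singleton (0:ℝ))] with s hs _
    exact Real.log_div hL.ne' (fun h => hs (Set.mem_singleton_iff.mpr h))
  rw [h2, intervalIntegral.integral_sub (intervalIntegrable_const) (log_intervalIntegrable hd0),
    intervalIntegral.integral_const, integral_log_zero hd0]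
  simp [smul_eq_mul]
  ring

theorem expected_log_bits_bound (ℓ : ℕ) (hℓ : 1 ≤ ℓ) (L δ : ℝ) (hL : 0 < L) (hδ : 0 < δ)
    (t : ℕ → ℝ) (h0 : t 0 = 0) (hend : t ℓ = δ)
    (hmono : ∀ i < ℓ, t i ≤ t (i + 1)) :
    (1 / δ) * ∑ i ∈ Finset.range ℓ,
        ∫ s in Set.Ioc (t i) (t (i + 1)), Real.log (L / (s - t i))
      ≤ 1 + Real.log (L * ℓ / δ) := by
  have hℓR : (0:ℝ) < (ℓ:ℝ) := by exact_mod_cast hℓ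
  set C : ℝ := 1 + Real.log L + Real.log ((ℓ:ℝ) / δ) with hC
  have key : ∀ i ∈ Finset.range ℓ,
      (∫ s in Set.Ioc (t i) (t (i + 1)), Real.log (L / (s - t i)))
        ≤ (t (i+1) - t i) * C + (δ / ℓ - (t (i+1) - t i)) := by
    intro i hi
    have hab := hmono i (Finset.mem_range.1 hi)
    rw [ioc_integral_eq hab hL]
    set d := t (i+1) - t i with hdd
    have hd0 : 0 ≤ d := by simp [hdd]; linarith
    -- need: d * (1 + log L - log d) ≤ d * C + (δ/ℓ - d)
    -- i.e. -d log d ≤ d * log(ℓ/δ) + δ/ℓ - d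
    rcases eq_or_lt_of_le hd0 with h | h
    · rw [← h]
      simp
      positivity
    · have h1 : Real.log ((δ/ℓ) / d) ≤ (δ/ℓ)/d - 1 :=
        Real.log_le_sub_one_of_pos (div_pos (div_pos hδ hℓR) h)
      have h2 : Real.log ((δ/ℓ) / d) = Real.log (δ/ℓ) - Real.log d :=
        Real.log_div (by positivity) h.ne'
      have h3 : Real.log (δ/ℓ) = - Real.log ((ℓ:ℝ)/δ) := by
        rw [← Real.log_inv]; congr 1; field_simp
      rw [h2, h3] at h1
      have h4 : d * (-Real.log ((ℓ:ℝ)/δ) - Real.log d) ≤ d * ((δ/ℓ)/d - 1) :=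
        mul_le_mul_of_nonneg_left h1 hd0
      have h5 : d * ((δ/ℓ)/d) = δ/ℓ := by field_simp
      rw [hC]
      nlinarith [h4, h5]
  have hsum := Finset.sum_le_sum key
  have htel : ∑ i ∈ Finset.range ℓ, (t (i+1) - t i) = δ := by
    rw [Finset.sum_range_sub t ℓ, hend, h0, sub_zero]
  have hsum2 : ∑ i ∈ Finset.range ℓ, ((t (i+1) - t i) * C + (δ / ℓ - (t (i+1) - t i)))
      = δ * C := by
    rw [Finset.sum_add_distrib, ← Finset.sum_mul, htel, Finset.sum_sub_distrib, htel,
      Finset.sum_const, Finset.card_range]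
    have hlc : (ℓ:ℝ) * (δ / ℓ) = δ := by field_simp
    rw [nsmul_eq_mul, hlc]; ring
  have hfinal : (1/δ) * ∑ i ∈ Finset.range ℓ,
      (∫ s in Set.Ioc (t i) (t (i + 1)), Real.log (L / (s - t i))) ≤ C := by
    rw [div_mul_eq_mul_div, one_mul, div_le_iff₀ hδ] at *
    calc _ ≤ δ * C := by rw [← hsum2]; exact hsum
    _ = C * δ := by ring
  refine hfinal.trans_eq ?_
  rw [hC]
  have : L * (ℓ:ℝ) / δ = L * ((ℓ:ℝ)/δ) := by ring
  rw [this, Real.log_mul hL.ne' (by positivity)]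
  ring
end

section
/- Let ℓ ≥ 1 be a natural number, let δ > 0 and L ≥ e·δ (where e is Euler's number), and let 0 = t₀ ≤ t₁ ≤ … ≤ t_ℓ = δ be real numbers. Then (1/δ)·Σ_{i=1}^{ℓ} ∫_{t_{i−1}}^{t_i} (log(L/(s − t_{i−1})))² ds ≤ (log(L·ℓ/δ))² + 2·log(L·ℓ/δ) + 2, where log denotes the natural logarithm and each integral is over s ∈ (t_{i−1}, t_i]. -/
open Real Set MeasureTheory

private lemma aux_h (w : ℝ) (hw : 0 ≤ w) :
    0 ≤ Real.exp w * (w ^ 2 + 2 * w - 4) + 2 * w + 4 := by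
  set f : ℝ → ℝ := fun x => Real.exp x * (x ^ 2 + 2 * x - 4) + 2 * x + 4 with hf
  have hd : ∀ x : ℝ, HasDerivAt f (Real.exp x * (x ^ 2 + 4 * x - 2) + 2) x := by
    intro x
    have hp : HasDerivAt (fun x : ℝ => x ^ 2 + 2 * x - 4) (2 * x + 2) x := by
      have h := ((hasDerivAt_pow 2 x).add ((hasDerivAt_id x).const_mul (2 : ℝ))).sub_const 4
      refine h.congr_deriv ?_
      norm_num
    have h1 := (Real.hasDerivAt_exp x).mul hp
    have h2 := ((hasDerivAt_id x).const_mul (2 : ℝ)).add_const 4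
    have h3 := h1.add h2
    refine (h3.congr_deriv ?_).congr_of_eventuallyEq (Filter.Eventually.of_forall fun y => ?_)
    · ring
    · simp only [hf, Pi.add_apply, Pi.mul_apply, id_eq]; ring
  have hkey : ∀ x : ℝ, 0 ≤ x → 0 ≤ Real.exp x * (x ^ 2 + 4 * x - 2) + 2 := by
    intro x hx
    have h1 : (1 - x) * Real.exp x ≤ 1 := by
      have h := Real.add_one_le_exp (-x)
      have hh : Real.exp (-x) * Real.exp x = 1 := by
        rw [← Real.exp_add]; simp
      nlinarith [Real.exp_pos x]
    have h2 : 1 ≤ Real.exp x := Real.one_le_exp hx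
    nlinarith [mul_nonneg (Real.exp_pos x).le (sq_nonneg x)]
  have hmono : MonotoneOn f (Set.Ici (0 : ℝ)) := by
    apply monotoneOn_of_deriv_nonneg (convex_Ici 0)
    · have : Continuous f := by
        rw [hf]; continuity
      exact this.continuousOn
    · intro x _
      exact (hd x).differentiableAt.differentiableWithinAt
    · intro x hx
      rw [(hd x).deriv]
      rw [interior_Ici] at hx
      exact hkey x (le_of_lt hx)
  have h0 : f 0 = 0 := by simp [hf]
  have := hmono Set.self_mem_Ici (Set.mem_Ici.mpr hw) hw
  rw [h0] at this
  exact this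

private lemma aux_A {x : ℝ} (hx : 0 < x) : x - x * Real.log x - 1 ≤ 0 := by
  have h := Real.log_le_sub_one_of_pos (inv_pos.mpr hx)
  rw [Real.log_inv] at h
  have h2 := mul_le_mul_of_nonneg_left h hx.le
  have hxi : x * x⁻¹ = 1 := mul_inv_cancel₀ hx.ne'
  nlinarith

private lemma aux_psi {x : ℝ} (hx0 : 0 < x) (hx1 : x ≤ 1) :
    x * Real.log x ^ 2 - 4 * x * Real.log x + 4 * x - 4 ≤ 0 := by
  set s := Real.sqrt x⁻¹ with hs
  have hxinv : (1 : ℝ) ≤ x⁻¹ := one_le_inv_iff₀.mpr ⟨hx0, hx1⟩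
  have hs1 : 1 ≤ s := Real.one_le_sqrt.mpr hxinv
  have hs2 : s ^ 2 = x⁻¹ := Real.sq_sqrt (by positivity)
  have hxs : x * s ^ 2 = 1 := by rw [hs2]; exact mul_inv_cancel₀ hx0.ne'
  have hlog : Real.log x = -(2 * Real.log s) := by
    have h1 : Real.log (s ^ 2) = 2 * Real.log s := by
      rw [Real.log_pow]; push_cast; ring
    have h2 : Real.log x⁻¹ = 2 * Real.log s := by rw [← hs2, h1]
    rw [Real.log_inv] at h2
    linarith
  have hls : Real.log s ≤ s - 1 := Real.log_le_sub_one_of_pos (by linarith)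
  have hls0 : 0 ≤ Real.log s := Real.log_nonneg hs1
  have hkey : (Real.log s + 1) ^ 2 ≤ s ^ 2 := by nlinarith
  rw [hlog]
  nlinarith [mul_le_mul_of_nonneg_left hkey hx0.le]

private lemma aux_chi {x : ℝ} (hx : 1 ≤ x) :
    4 * x - 2 * x * Real.log x - x * Real.log x ^ 2 - 2 * Real.log x - 4 ≤ 0 := by
  have hw : 0 ≤ Real.log x := Real.log_nonneg hx
  have h2 := aux_h (Real.log x) hw
  rw [Real.exp_log (by linarith : (0:ℝ) < x)] at h2
  linarith

private lemma aux_key {x v : ℝ} (hx : 0 < x) (hv : 1 ≤ v) (hvw : Real.log x + 1 ≤ v) :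
    x * ((v - Real.log x) ^ 2 + 2 * (v - Real.log x) + 2) ≤ x * v ^ 2 + 2 * v + 2 := by
  have hA := aux_A hx
  rcases le_total x 1 with h1 | h1
  · have hB := aux_psi hx h1
    have hm := mul_nonpos_of_nonneg_of_nonpos (by linarith : (0:ℝ) ≤ v - 1) hA
    nlinarith
  · have hC := aux_chi h1
    have hm := mul_nonpos_of_nonneg_of_nonpos
      (by linarith : (0:ℝ) ≤ v - (1 + Real.log x)) hA
    nlinarith

private lemma aux_tangent {L c a : ℝ} (hc : 0 < c) (ha : 0 ≤ a)
    (haL : Real.exp 1 * a ≤ L) (hcL : Real.exp 1 * c ≤ L) :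
    a * ((Real.log L - Real.log a) ^ 2 + 2 * (Real.log L - Real.log a) + 2)
      ≤ c * ((Real.log L - Real.log c) ^ 2 + 2 * (Real.log L - Real.log c) + 2)
        + (Real.log L - Real.log c) ^ 2 * (a - c) := by
  have he : (0 : ℝ) < Real.exp 1 := Real.exp_pos 1
  have hL0 : 0 < L := lt_of_lt_of_le (by positivity) hcL
  have hv : 1 ≤ Real.log L - Real.log c := by
    have h := Real.log_le_log (by positivity) hcL
    rw [Real.log_mul (by positivity) hc.ne', Real.log_exp] at h
    linarith
  rcases eq_or_lt_of_le ha with h0 | ha0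
  · rw [← h0]
    simp only [zero_mul]
    nlinarith
  · obtain ⟨x, hx0, rfl⟩ : ∃ x, 0 < x ∧ a = x * c :=
      ⟨a / c, div_pos ha0 hc, (div_mul_cancel₀ a hc.ne').symm⟩
    have hva : 1 ≤ Real.log L - Real.log (x * c) := by
      have h := Real.log_le_log (by positivity) haL
      rw [Real.log_mul (by positivity) (by positivity)] at h
      rw [Real.log_exp] at h
      linarith
    rw [Real.log_mul hx0.ne' hc.ne'] at hva ⊢
    have hkey := aux_key hx0 hv (by linarith)
    nlinarith [mul_le_mul_of_nonneg_left hkey hc.le]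

private lemma aux_integral {L : ℝ} (hL : 0 < L) {a : ℝ} (ha : 0 ≤ a) :
    ∫ s in Set.Ioc (0 : ℝ) a, (Real.log (L / s)) ^ 2
      = a * ((Real.log L - Real.log a) ^ 2 + 2 * (Real.log L - Real.log a) + 2) := by
  set G : ℝ → ℝ :=
    fun x => x * ((Real.log L - Real.log x) ^ 2 + 2 * (Real.log L - Real.log x) + 2) with hG
  rcases eq_or_lt_of_le ha with h0 | ha0
  · rw [← h0]; simp
  -- replace the integrand by (log L - log s)^2 on Ioc 0 a
  have hcongr : ∫ s in Set.Ioc (0 : ℝ) a, (Real.log (L / s)) ^ 2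
      = ∫ s in Set.Ioc (0 : ℝ) a, (Real.log L - Real.log s) ^ 2 := by
    apply MeasureTheory.setIntegral_congr_fun measurableSet_Ioc
    intro s hs
    have hs0 : (0 : ℝ) < s := hs.1
    show Real.log (L / s) ^ 2 = (Real.log L - Real.log s) ^ 2
    rw [Real.log_div hL.ne' hs0.ne']
  have hderiv : ∀ x : ℝ, 0 < x → HasDerivAt G ((Real.log L - Real.log x) ^ 2) x := by
    intro x hx0
    have h1 : HasDerivAt (fun y : ℝ => Real.log L - Real.log y) (-x⁻¹) x := by
      simpa using (Real.hasDerivAt_log hx0.ne').const_sub (Real.log L)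
    have h2 : HasDerivAt
        (fun y : ℝ => (Real.log L - Real.log y) ^ 2 + 2 * (Real.log L - Real.log y) + 2)
        (2 * (Real.log L - Real.log x) * -x⁻¹ + 2 * -x⁻¹) x := by
      have hsq := h1.pow 2
      have hlin := h1.const_mul (2 : ℝ)
      have := (hsq.add hlin).add_const 2
      refine this.congr_deriv ?_
      norm_num
    have h3 := (hasDerivAt_id x).mul h2
    refine h3.congr_deriv ?_
    simp only [id_eq]
    field_simp
    ring
  have hcont : ContinuousOn G (Set.Icc 0 a) := by
    intro y hy
    rcases eq_or_lt_of_le hy.1 with h0 | hy0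
    · rw [← h0]
      apply ContinuousWithinAt.mono _ (Set.Icc_subset_Ici_self)
      rw [← continuousWithinAt_Ioi_iff_Ici]
      have hG0 : G 0 = 0 := by simp [hG]
      unfold ContinuousWithinAt
      rw [hG0]
      set Λ := Real.log L
      have hxl : Filter.Tendsto (fun x : ℝ => Real.log x * x ^ (1 : ℝ))
          (nhdsWithin 0 (Set.Ioi 0)) (nhds 0) := tendsto_log_mul_rpow_nhdsGT_zero one_pos
      have hxl1 : Filter.Tendsto (fun x : ℝ => x * Real.log x)
          (nhdsWithin 0 (Set.Ioi 0)) (nhds 0) := by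
        refine hxl.congr' ?_
        filter_upwards [self_mem_nhdsWithin] with x hx
        rw [Real.rpow_one]; ring
      have hhalf : Filter.Tendsto (fun x : ℝ => Real.log x * x ^ ((1:ℝ)/2))
          (nhdsWithin 0 (Set.Ioi 0)) (nhds 0) :=
        tendsto_log_mul_rpow_nhdsGT_zero (by norm_num)
      have hxl2 : Filter.Tendsto (fun x : ℝ => x * Real.log x ^ 2)
          (nhdsWithin 0 (Set.Ioi 0)) (nhds 0) := by
        have := hhalf.mul hhalf
        rw [mul_zero] at this
        refine this.congr' ?_
        filter_upwards [self_mem_nhdsWithin] with x hx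
        have hx0 : (0:ℝ) < x := hx
        rw [show Real.log x * x ^ ((1:ℝ)/2) * (Real.log x * x ^ ((1:ℝ)/2))
            = x ^ ((1:ℝ)/2) * x ^ ((1:ℝ)/2) * Real.log x ^ 2 from by ring,
          ← Real.rpow_add hx0]
        norm_num
      have hid : Filter.Tendsto (fun x : ℝ => x) (nhdsWithin 0 (Set.Ioi 0)) (nhds 0) :=
        Filter.Tendsto.mono_left Filter.tendsto_id nhdsWithin_le_nhds
      have hsum : Filter.Tendsto
          (fun x : ℝ => (Λ^2 + 2*Λ + 2) * x - (2*Λ + 2) * (x * Real.log x) + x * Real.log x ^ 2)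
          (nhdsWithin 0 (Set.Ioi 0)) (nhds 0) := by
        have := ((hid.const_mul (Λ^2 + 2*Λ + 2)).sub (hxl1.const_mul (2*Λ + 2))).add hxl2
        simpa using this
      refine hsum.congr ?_
      intro x
      simp only [hG]
      ring
    · exact ((hderiv y hy0).continuousAt).continuousWithinAt
  have hderiv' : ∀ x ∈ Set.Ioo 0 a, HasDerivAt G ((Real.log L - Real.log x) ^ 2) x :=
    fun x hx => hderiv x hx.1
  have hnonneg : ∀ x ∈ Set.Ioo 0 a, 0 ≤ (Real.log L - Real.log x) ^ 2 := fun x _ => sq_nonneg _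
  have hint : IntegrableOn (fun x : ℝ => (Real.log L - Real.log x) ^ 2) (Set.Ioc 0 a) :=
    intervalIntegral.integrableOn_deriv_of_nonneg hcont hderiv' hnonneg
  have hii : IntervalIntegrable (fun x : ℝ => (Real.log L - Real.log x) ^ 2) volume 0 a :=
    (intervalIntegrable_iff_integrableOn_Ioc_of_le ha).mpr hint
  have hftc := intervalIntegral.integral_eq_sub_of_hasDerivAt_of_le ha hcont hderiv' hii
  rw [hcongr, ← intervalIntegral.integral_of_le ha, hftc]
  simp [hG]

theorem expected_logsq_time_bound (ℓ : ℕ) (hℓ : 1 ≤ ℓ) (L δ : ℝ) (hδ : 0 < δ)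
    (hL : Real.exp 1 * δ ≤ L)
    (t : ℕ → ℝ) (h0 : t 0 = 0) (hend : t ℓ = δ)
    (hmono : ∀ i < ℓ, t i ≤ t (i + 1)) :
    (1 / δ) * ∑ i ∈ Finset.range ℓ,
        ∫ s in Set.Ioc (t i) (t (i + 1)), (Real.log (L / (s - t i))) ^ 2
      ≤ (Real.log (L * ℓ / δ)) ^ 2 + 2 * Real.log (L * ℓ / δ) + 2 := by
  have he : (0:ℝ) < Real.exp 1 := Real.exp_pos 1
  have hL0 : 0 < L := lt_of_lt_of_le (by positivity) hL
  have hℓ0 : (0:ℝ) < (ℓ:ℝ) := by exact_mod_cast hℓ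
  set c : ℝ := δ / ℓ with hc_def
  have hc : 0 < c := div_pos hδ hℓ0
  have hcδ : c ≤ δ := div_le_self hδ.le (by exact_mod_cast hℓ)
  have hcL : Real.exp 1 * c ≤ L := le_trans (by nlinarith) hL
  have hsum : ∑ i ∈ Finset.range ℓ, (t (i+1) - t i) = δ := by
    rw [Finset.sum_range_sub, h0, hend, sub_zero]
  have hnn : ∀ i ∈ Finset.range ℓ, 0 ≤ t (i+1) - t i := by
    intro i hi; rw [Finset.mem_range] at hi
    linarith [hmono i hi]
  have hub : ∀ i ∈ Finset.range ℓ, t (i+1) - t i ≤ δ := by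
    intro i hi
    calc t (i+1) - t i ≤ ∑ j ∈ Finset.range ℓ, (t (j+1) - t j) :=
          Finset.single_le_sum hnn hi
      _ = δ := hsum
  set v := Real.log L - Real.log c with hv_def
  have hterm : ∀ i ∈ Finset.range ℓ,
      (∫ s in Set.Ioc (t i) (t (i + 1)), (Real.log (L / (s - t i))) ^ 2)
        ≤ c * (v^2 + 2*v + 2) + v^2 * ((t (i+1) - t i) - c) := by
    intro i hi
    have hti := hmono i (Finset.mem_range.mp hi)
    have hnni := hnn i hi
    have heq : (∫ s in Set.Ioc (t i) (t (i + 1)), (Real.log (L / (s - t i))) ^ 2)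
        = (t (i+1) - t i) * ((Real.log L - Real.log (t (i+1) - t i))^2
            + 2*(Real.log L - Real.log (t (i+1) - t i)) + 2) := by
      rw [← intervalIntegral.integral_of_le hti,
        intervalIntegral.integral_comp_sub_right (f := fun s => (Real.log (L / s)) ^ 2) (t i),
        sub_self, intervalIntegral.integral_of_le hnni]
      exact aux_integral hL0 hnni
    rw [heq, hv_def]
    exact aux_tangent hc hnni (le_trans (by nlinarith [hub i hi]) hL) hcL
  have hsum2 : (∑ i ∈ Finset.range ℓ,
      ∫ s in Set.Ioc (t i) (t (i + 1)), (Real.log (L / (s - t i))) ^ 2)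
        ≤ δ * (v^2 + 2*v + 2) := by
    have hlc : (ℓ:ℝ) * c = δ := by
      rw [hc_def, mul_comm, div_mul_cancel₀ δ hℓ0.ne']
    calc (∑ i ∈ Finset.range ℓ,
          ∫ s in Set.Ioc (t i) (t (i + 1)), (Real.log (L / (s - t i))) ^ 2)
        ≤ ∑ i ∈ Finset.range ℓ, (c * (v^2 + 2*v + 2) + v^2 * ((t (i+1) - t i) - c)) :=
          Finset.sum_le_sum hterm
      _ = (ℓ:ℝ) * (c * (v^2+2*v+2)) + v^2 * (δ - (ℓ:ℝ) * c) := by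
          rw [Finset.sum_add_distrib, Finset.sum_const, Finset.card_range, ← Finset.mul_sum,
            Finset.sum_sub_distrib, hsum, Finset.sum_const, Finset.card_range]
          push_cast
          ring
      _ = δ * (v^2 + 2*v + 2) := by
          rw [← mul_assoc, hlc]
          ring
  have hveq : v = Real.log (L * ℓ / δ) := by
    rw [hv_def, hc_def, Real.log_div hδ.ne' hℓ0.ne', Real.log_div (by positivity) hδ.ne',
      Real.log_mul hL0.ne' hℓ0.ne']
    ring
  rw [← hveq]
  calc (1 / δ) * ∑ i ∈ Finset.range ℓ,
        ∫ s in Set.Ioc (t i) (t (i + 1)), (Real.log (L / (s - t i))) ^ 2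
      ≤ (1 / δ) * (δ * (v^2 + 2*v + 2)) := by
        apply mul_le_mul_of_nonneg_left hsum2 (by positivity)
    _ = v^2 + 2*v + 2 := by field_simp
end

section
/- Let n ≥ 2 be a natural number and let a > 0 and b > 0 be real numbers. Then ∫₀^a t^{n−2}·(a − t)·log(b·(a − t)) dt = (aⁿ/(n·(n−1)))·(log(a·b) − H_{n−1} + (n−1)/n), where log denotes the natural logarithm and H_{n−1} is the (n−1)-st harmonic number. -/
open MeasureTheory intervalIntegral Set Filter Real
open scoped Topology

-- integrability of log on (0,a)
lemma ilog (a : ℝ) (ha : 0 < a) : IntervalIntegrable Real.log volume 0 a := by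
  have hcont : ContinuousOn (fun t : ℝ => t * Real.log a - t * Real.log t + t) (Icc 0 a) :=
    (((continuous_id.mul continuous_const).sub Real.continuous_mul_log).add continuous_id).continuousOn
  have hderiv : ∀ x ∈ Ioo (0:ℝ) a,
      HasDerivAt (fun t : ℝ => t * Real.log a - t * Real.log t + t)
        (Real.log a - Real.log x) x := by
    intro x hx
    have h1 : HasDerivAt (fun t : ℝ => t * Real.log a) (1 * Real.log a) x :=
      (hasDerivAt_id x).mul_const _
    have h2 := Real.hasDerivAt_mul_log hx.1.ne'
    have := (h1.sub h2).add (hasDerivAt_id x)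
    refine this.congr_deriv ?_
    ring
  have hpos : ∀ x ∈ Ioo (0:ℝ) a, 0 ≤ Real.log a - Real.log x := by
    intro x hx
    have := Real.log_le_log hx.1 hx.2.le
    linarith
  have hInt : IntegrableOn (fun x => Real.log a - Real.log x) (Ioc 0 a) volume :=
    integrableOn_deriv_of_nonneg hcont hderiv hpos
  rw [intervalIntegrable_iff_integrableOn_Ioc_of_le ha.le]
  have : (Real.log : ℝ → ℝ) = fun x => Real.log a - (Real.log a - Real.log x) := by
    funext x; ring
  rw [this]
  exact (integrableOn_const measure_Ioc_lt_top.ne).sub hInt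

lemma ilogb (a b : ℝ) (ha : 0 < a) (hb : 0 < b) :
    IntervalIntegrable (fun t => Real.log (b * t)) volume 0 a := by
  rw [intervalIntegrable_iff_integrableOn_Ioc_of_le ha.le]
  have h := (ilog a ha)
  rw [intervalIntegrable_iff_integrableOn_Ioc_of_le ha.le] at h
  have : IntegrableOn (fun t => Real.log b + Real.log t) (Ioc 0 a) volume :=
    (integrableOn_const measure_Ioc_lt_top.ne).add h
  refine this.congr_fun (fun x hx => ?_) measurableSet_Ioc
  rw [Real.log_mul hb.ne' hx.1.ne']

lemma ilogab (a b : ℝ) (ha : 0 < a) (hb : 0 < b) :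
    IntervalIntegrable (fun t => Real.log (b * (a - t))) volume 0 a := by
  have := ((ilogb a b ha hb).comp_sub_left a).symm
  simpa using this

lemma iint (m : ℕ) (a b : ℝ) (ha : 0 < a) (hb : 0 < b) :
    IntervalIntegrable (fun t => t ^ m * Real.log (b * (a - t))) volume 0 a :=
  (ilogab a b ha hb).continuousOn_mul (by fun_prop)


lemma key_log_int (m : ℕ) (a b : ℝ) (ha : 0 < a) (hb : 0 < b) :
    ∫ t in (0:ℝ)..a, t ^ m * Real.log (b * (a - t))
      = a ^ (m+1) / ((m:ℝ)+1)
          * (Real.log (a * b) - ∑ k ∈ Finset.range (m+1), (1:ℝ)/(k+1)) := by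
  set M : ℝ := (m : ℝ) + 1 with hM
  have hM0 : M ≠ 0 := by positivity
  set S : ℝ → ℝ := fun t => ∑ k ∈ Finset.range (m+1), a ^ k * t ^ (m - k + 1) / ((m - k + 1 : ℕ) : ℝ)
    with hSdef
  set F : ℝ → ℝ := fun t => (t ^ (m+1) - a ^ (m+1)) / M * Real.log (b * (a - t)) - S t / M
    with hFdef
  have hgeom : ∀ x : ℝ, (∑ k ∈ Finset.range (m+1), a ^ k * x ^ (m - k)) * (a - x)
      = a ^ (m+1) - x ^ (m+1) := by
    intro x
    simpa using geom_sum₂_mul a x (m+1)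
  have hderiv : ∀ x ∈ Ioo (0:ℝ) a,
      HasDerivAt F (x ^ m * Real.log (b * (a - x))) x := by
    intro x hx
    have hax : a - x ≠ 0 := sub_ne_zero.2 hx.2.ne'
    have hbax : b * (a - x) ≠ 0 := by
      have : 0 < a - x := by linarith [hx.2]
      positivity
    have hP : HasDerivAt (fun t : ℝ => (t ^ (m+1) - a ^ (m+1)) / M) (x ^ m) x := by
      have := ((hasDerivAt_pow (m+1) x).sub_const (a ^ (m+1))).div_const M
      refine this.congr_deriv ?_
      simp only [Nat.add_sub_cancel, Nat.cast_add, Nat.cast_one, ← hM]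
      field_simp
    have hL : HasDerivAt (fun t : ℝ => Real.log (b * (a - t))) (-(a - x)⁻¹) x := by
      have hin : HasDerivAt (fun t : ℝ => b * (a - t)) (b * (0 - 1)) x :=
        ((hasDerivAt_const x a).sub (hasDerivAt_id x)).const_mul b
      have := (Real.hasDerivAt_log hbax).comp x hin
      refine this.congr_deriv ?_
      field_simp
      norm_num
    have hS : HasDerivAt S (∑ k ∈ Finset.range (m+1), a ^ k * x ^ (m - k)) x := by
      apply HasDerivAt.fun_sum
      intro k hk
      have hk1 : ((m - k + 1 : ℕ) : ℝ) ≠ 0 := by positivity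
      have := ((hasDerivAt_pow (m - k + 1) x).const_mul (a ^ k)).div_const
        ((m - k + 1 : ℕ) : ℝ)
      refine this.congr_deriv ?_
      simp only [Nat.add_sub_cancel]
      field_simp
    have htot := (hP.mul hL).sub (hS.div_const M)
    have h := hgeom x
    have hAB : (x ^ (m+1) - a ^ (m+1)) / M * -(a - x)⁻¹
        - (∑ k ∈ Finset.range (m+1), a ^ k * x ^ (m - k)) / M = 0 := by
      rw [sub_eq_zero]
      field_simp
      linear_combination (-1:ℝ) * h
    refine htot.congr_deriv ?_
    rw [add_sub_assoc, hAB, add_zero]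
  -- limit at 0
  have hF0 : Tendsto F (𝓝[>] (0:ℝ)) (𝓝 (F 0)) := by
    have hba : b * (a - 0) ≠ 0 := by simpa using (by positivity : b * a ≠ 0)
    have hScont : Continuous S := by
      apply continuous_finset_sum
      intro k hk
      fun_prop
    have hlogc : ContinuousAt (fun x : ℝ => Real.log (b * (a - x))) 0 :=
      ContinuousAt.log (by fun_prop) hba
    have hc : ContinuousAt F 0 :=
      (ContinuousAt.mul (by fun_prop) hlogc).sub (hScont.continuousAt.div_const M)
    exact hc.continuousWithinAt.tendsto
  -- limit at a
  have hu : Tendsto (fun u : ℝ => u * Real.log (b * u)) (𝓝[>] (0:ℝ)) (𝓝 0) := by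
    have h3 : Tendsto (fun u : ℝ => u * Real.log b + u * Real.log u) (𝓝 0) (𝓝 0) := by
      have hc : Continuous fun u : ℝ => u * Real.log b + u * Real.log u :=
        (continuous_id.mul continuous_const).add Real.continuous_mul_log
      simpa using hc.tendsto 0
    refine (h3.mono_left nhdsWithin_le_nhds).congr' ?_
    filter_upwards [self_mem_nhdsWithin] with u hu
    rw [Real.log_mul hb.ne' (ne_of_gt hu)]
    ring
  have hAt : Tendsto (fun t : ℝ => a - t) (𝓝[<] a) (𝓝[>] (0:ℝ)) := by
    apply tendsto_nhdsWithin_of_tendsto_nhds_of_eventually_within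
    · have : Tendsto (fun t : ℝ => a - t) (𝓝 a) (𝓝 (a - a)) :=
        (continuous_const.sub continuous_id).tendsto a
      simpa using this.mono_left nhdsWithin_le_nhds
    · filter_upwards [self_mem_nhdsWithin] with t ht
      simpa using sub_pos.2 (mem_Iio.mp ht)
  have hmain : Tendsto (fun t : ℝ => (a - t) * Real.log (b * (a - t))) (𝓝[<] a) (𝓝 0) :=
    hu.comp hAt
  have hSa : Tendsto (fun t : ℝ => S t / M) (𝓝[<] a) (𝓝 (S a / M)) := by
    have hScont : Continuous S := by
      apply continuous_finset_sum
      intro k hk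
      fun_prop
    exact ((hScont.continuousAt).div_const M).continuousWithinAt.tendsto
  have hfirst : Tendsto (fun t : ℝ => (t ^ (m+1) - a ^ (m+1)) / M * Real.log (b * (a - t)))
      (𝓝[<] a) (𝓝 0) := by
    have hcont : Tendsto (fun t : ℝ => -(∑ k ∈ Finset.range (m+1), a ^ k * t ^ (m - k)) / M)
        (𝓝[<] a) (𝓝 (-(∑ k ∈ Finset.range (m+1), a ^ k * a ^ (m - k)) / M)) := by
      have hc : Continuous (fun t : ℝ => -(∑ k ∈ Finset.range (m+1), a ^ k * t ^ (m - k)) / M) := by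
        apply Continuous.div_const
        apply Continuous.neg
        apply continuous_finset_sum
        intro k hk
        fun_prop
      exact hc.continuousAt.continuousWithinAt.tendsto
    have := hcont.mul hmain
    rw [mul_zero] at this
    refine this.congr' ?_
    filter_upwards [self_mem_nhdsWithin] with t ht
    have h := hgeom t
    have hat : a - t ≠ 0 := sub_ne_zero.2 (ne_of_gt ht)
    field_simp
    linear_combination (-1:ℝ) * Real.log ((a - t) * b) * h
  have hFa : Tendsto F (𝓝[<] a) (𝓝 (0 - S a / M)) := hfirst.sub hSa
  have hEq := integral_eq_sub_of_hasDerivAt_of_tendsto ha hderiv (iint m a b ha hb) hF0 hFa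
  have hS0 : S 0 = 0 := by
    rw [hSdef]
    apply Finset.sum_eq_zero
    intro k hk
    simp
  have hSa : S a = a ^ (m+1) * ∑ k ∈ Finset.range (m+1), (1:ℝ)/(k+1) := by
    rw [hSdef, ← Finset.sum_range_reflect (fun k : ℕ => (1:ℝ)/((k:ℝ)+1)) (m+1),
      Finset.mul_sum]
    apply Finset.sum_congr rfl
    intro k hk
    have hk' : k ≤ m := Nat.lt_succ_iff.mp (Finset.mem_range.mp hk)
    have h1 : m + 1 - 1 - k = m - k := by omega
    have h2 : a ^ k * a ^ (m - k + 1) = a ^ (m+1) := by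
      rw [← pow_add]; congr 1; omega
    have h3 : ((m - k + 1 : ℕ) : ℝ) = ((m - k : ℕ) : ℝ) + 1 := by push_cast; ring
    rw [h1, h2, h3]
    ring
  have hF0v : F 0 = -(a ^ (m+1)) / M * Real.log (b * a) := by
    rw [hFdef]
    simp [hS0]
  rw [hEq, hF0v, hSa, mul_comm b a]
  ring


theorem integral_pow_mul_lin_mul_log (n : ℕ) (hn : 2 ≤ n) (a b : ℝ) (ha : 0 < a) (hb : 0 < b) :
    ∫ t in Set.Ioc (0 : ℝ) a, t ^ (n - 2) * (a - t) * Real.log (b * (a - t))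
      = (a ^ n / (n * (n - 1)))
          * (Real.log (a * b) - (∑ k ∈ Finset.range (n - 1), (1 : ℝ) / (k + 1))
              + (n - 1) / n) := by
  obtain ⟨m, rfl⟩ : ∃ m, n = m + 2 := ⟨n - 2, by omega⟩
  have e2 : m + 2 - 2 = m := by omega
  have e1 : m + 2 - 1 = m + 1 := by omega
  rw [e2, e1, ← intervalIntegral.integral_of_le ha.le]
  rw [show (fun t : ℝ => t ^ m * (a - t) * Real.log (b * (a - t)))
      = fun t : ℝ => a * (t ^ m * Real.log (b * (a - t)))
          - t ^ (m+1) * Real.log (b * (a - t)) from funext fun t => by ring]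
  rw [intervalIntegral.integral_sub ((iint m a b ha hb).const_mul a) (iint (m+1) a b ha hb),
    intervalIntegral.integral_const_mul, key_log_int m a b ha hb, key_log_int (m+1) a b ha hb,
    Finset.sum_range_succ (fun k : ℕ => (1:ℝ)/((k:ℝ)+1)) (m+1)]
  have h1 : (m:ℝ) + 1 ≠ 0 := by positivity
  have h2 : (m:ℝ) + 2 ≠ 0 := by positivity
  push_cast
  rw [show ((m:ℝ) + 2 - 1) = (m:ℝ) + 1 from by ring]
  field_simp
  ring
end

section
/- Let n ≥ 2 be a natural number, let a > 0, and let f : ℝ → [0, ∞] be a measurable function. Then, with respect to Lebesgue measure on ℝⁿ, ∫_{[0,a]ⁿ} f(max_i v_i − min_i v_i) dv = n·(n−1)·∫₀^a t^{n−2}·(a − t)·f(t) dt. -/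
open MeasureTheory
open scoped ENNReal

private lemma lemA (NN : ℕ) (a m : ℝ) (hm0 : 0 ≤ m) (hma : m ≤ a) :
    ∫⁻ x in Set.Ioc (0:ℝ) a, ENNReal.ofReal ((min m (a - x)) ^ NN)
      = ENNReal.ofReal ((a - m) * m ^ NN + m ^ (NN+1) / (NN+1)) := by
  have h0a : (0:ℝ) ≤ a := hm0.trans hma
  have hcont : Continuous fun x : ℝ => (min m (a - x)) ^ NN :=
    (continuous_const.min (continuous_const.sub continuous_id)).pow NN
  rw [← MeasureTheory.ofReal_integral_eq_lintegral_ofReal hcont.integrableOn_Ioc ?_]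
  · congr 1
    rw [← intervalIntegral.integral_of_le h0a,
      ← intervalIntegral.integral_add_adjacent_intervals
        (hcont.intervalIntegrable 0 (a-m)) (hcont.intervalIntegrable (a-m) a)]
    have h1 : (∫ x in (0:ℝ)..(a-m), (min m (a-x))^NN) = (a - m) * m ^ NN := by
      rw [intervalIntegral.integral_congr (g := fun _ => m ^ NN) ?_]
      · rw [intervalIntegral.integral_const, smul_eq_mul, sub_zero]
      · intro x hx
        rw [Set.uIcc_of_le (by linarith)] at hx
        have hx2 : x ≤ a - m := hx.2
        have : m ≤ a - x := by linarith
        simp [min_eq_left this]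
    have h2 : (∫ x in (a-m)..a, (min m (a-x))^NN) = m^(NN+1)/(NN+1) := by
      have hEq : Set.EqOn (fun x : ℝ => (min m (a-x))^NN) (fun x => (a - x)^NN)
          (Set.uIcc (a-m) a) := by
        intro x hx
        rw [Set.uIcc_of_le (by linarith)] at hx
        have hx1 : a - m ≤ x := hx.1
        have : a - x ≤ m := by linarith
        simp [min_eq_right this]
      rw [intervalIntegral.integral_congr hEq,
        intervalIntegral.integral_comp_sub_left (fun y : ℝ => y ^ NN) a]
      simp only [sub_self, sub_sub_cancel]
      rw [integral_pow]
      simp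
    rw [h1, h2]
  · filter_upwards [ae_restrict_mem measurableSet_Ioc] with x hx
    have h1 : 0 ≤ a - x := by linarith [hx.2]
    positivity

private lemma lemA' (K : ℕ) (a m : ℝ) (hm0 : 0 ≤ m) (hma : m ≤ a) :
    ∫⁻ t in Set.Ioc (0:ℝ) m, ENNReal.ofReal (t ^ K * (a - t))
      = ENNReal.ofReal (a * m^(K+1)/(K+1) - m^(K+2)/(K+2)) := by
  have hcont : Continuous fun t : ℝ => t ^ K * (a - t) :=
    (continuous_pow K).mul (continuous_const.sub continuous_id)
  rw [← MeasureTheory.ofReal_integral_eq_lintegral_ofReal hcont.integrableOn_Ioc ?_]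
  · congr 1
    rw [← intervalIntegral.integral_of_le hm0]
    have heq : (fun t : ℝ => t ^ K * (a - t)) = fun t : ℝ => a * t ^ K - t ^ (K+1) := by
      funext t; ring
    rw [heq, intervalIntegral.integral_sub
        ((intervalIntegral.intervalIntegrable_pow K).const_mul a)
        (intervalIntegral.intervalIntegrable_pow (K+1)),
      intervalIntegral.integral_const_mul, integral_pow, integral_pow]
    push_cast
    ring
  · filter_upwards [ae_restrict_mem measurableSet_Ioc] with t ht
    have h1 : 0 ≤ t := le_of_lt ht.1
    have h2 : 0 ≤ a - t := by linarith [ht.2]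
    positivity

private lemma hyperplane_null (N : ℕ) (j k : Fin (N+1)) (h : j ≠ k) :
    (volume : Measure (Fin (N+1) → ℝ)) {v | v j = v k} = 0 := by
  obtain ⟨k', hk'⟩ := Fin.exists_succAbove_eq h.symm
  have hmp := volume_preserving_piFinSuccAbove (fun _ : Fin (N+1) => ℝ) j
  have hT : MeasurableSet {p : ℝ × (Fin N → ℝ) | p.1 = p.2 k'} :=
    measurableSet_eq_fun measurable_fst ((measurable_pi_apply k').comp measurable_snd)
  have hset : {v : Fin (N+1) → ℝ | v j = v k}
      = (MeasurableEquiv.piFinSuccAbove (fun _ : Fin (N+1) => ℝ) j) ⁻¹'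
        {p : ℝ × (Fin N → ℝ) | p.1 = p.2 k'} := by
    ext v
    simp [MeasurableEquiv.piFinSuccAbove, Fin.insertNthEquiv, Fin.removeNth, hk']
  rw [hset, hmp.measure_preimage hT.nullMeasurableSet, Measure.volume_eq_prod,
    Measure.prod_apply_symm hT]
  have : ∀ y : Fin N → ℝ,
      ((fun x => (x, y)) ⁻¹' {p : ℝ × (Fin N → ℝ) | p.1 = p.2 k'}) = {y k'} := by
    intro y; ext x; simp
  simp only [this]
  simp

private lemma vol_slab (N : ℕ) (i : Fin (N+1)) (a s m : ℝ) (h0a : 0 ≤ a) (hs : 0 ≤ s)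
    (hm : m = min s a) :
    (volume : Measure (Fin (N+1) → ℝ))
        {v | v i ∈ Set.Icc 0 a ∧ ∀ j, j ≠ i → v j ∈ Set.Ioc (v i) (min (v i + s) a)}
      = ENNReal.ofReal ((a - m) * m ^ N + m ^ (N+1) / (N+1)) := by
  have hmp := volume_preserving_piFinSuccAbove (fun _ : Fin (N+1) => ℝ) i
  set T : Set (ℝ × (Fin N → ℝ)) :=
    {p | p.1 ∈ Set.Icc 0 a ∧ ∀ j', p.2 j' ∈ Set.Ioc p.1 (min (p.1 + s) a)} with hTdef
  have hT : MeasurableSet T := by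
    rw [hTdef, Set.setOf_and]
    apply MeasurableSet.inter
    · exact measurable_fst measurableSet_Icc
    · rw [Set.setOf_forall]
      refine MeasurableSet.iInter fun j' => ?_
      have h1 : Measurable fun p : ℝ × (Fin N → ℝ) => p.2 j' :=
        (measurable_pi_apply j').comp measurable_snd
      exact (measurableSet_lt measurable_fst h1).inter
        (measurableSet_le h1 ((measurable_fst.add_const s).min measurable_const))
  have hset : {v : Fin (N+1) → ℝ | v i ∈ Set.Icc 0 a ∧
        ∀ j, j ≠ i → v j ∈ Set.Ioc (v i) (min (v i + s) a)}
      = (MeasurableEquiv.piFinSuccAbove (fun _ : Fin (N+1) => ℝ) i) ⁻¹' T := by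
    ext v
    simp only [Set.mem_preimage, hTdef, Set.mem_setOf_eq,
      MeasurableEquiv.piFinSuccAbove, MeasurableEquiv.coe_mk, Fin.insertNthEquiv,
      Equiv.coe_fn_symm_mk, Fin.removeNth]
    constructor
    · rintro ⟨h1, h2⟩
      exact ⟨h1, fun j' => h2 _ (Fin.succAbove_ne i j')⟩
    · rintro ⟨h1, h2⟩
      refine ⟨h1, fun j hj => ?_⟩
      obtain ⟨j', rfl⟩ := Fin.exists_succAbove_eq hj
      exact h2 j'
  rw [hset, hmp.measure_preimage hT.nullMeasurableSet, Measure.volume_eq_prod,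
    Measure.prod_apply hT]
  have hsec : ∀ x : ℝ, (volume : Measure (Fin N → ℝ)) (Prod.mk x ⁻¹' T)
      = Set.indicator (Set.Icc 0 a) (fun x => ENNReal.ofReal ((min m (a - x)) ^ N)) x := by
    intro x
    by_cases hx : x ∈ Set.Icc (0:ℝ) a
    · have : Prod.mk x ⁻¹' T = Set.pi Set.univ (fun _ : Fin N => Set.Ioc x (min (x + s) a)) := by
        ext y
        simp only [Set.mem_preimage, hTdef, Set.mem_setOf_eq, Set.mem_pi, Set.mem_univ,
          Set.mem_Icc, Set.mem_Ioc, le_inf_iff, and_assoc, true_implies]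
        exact ⟨fun h => h.2.2, fun h => ⟨hx.1, hx.2, h⟩⟩
      rw [this, volume_pi_pi]
      have hmin : min (x + s) a - x = min m (a - x) := by
        rw [hm]
        rcases le_total (x + s) a with h | h
        · have h1 : s ≤ a - x := by linarith
          have h2 : s ≤ a := by linarith [hx.1]
          rw [min_eq_left h, min_eq_left h2, min_eq_left h1]; ring
        · have h1 : a - x ≤ s := by linarith
          rw [min_eq_right h, min_eq_right (le_min h1 (by linarith [hx.1]))]
      rw [Set.indicator_of_mem hx]
      simp only [Real.volume_Ioc, hmin]
      rw [Finset.prod_const, Finset.card_univ, Fintype.card_fin,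
        ← ENNReal.ofReal_pow]
      have : 0 ≤ a - x := by linarith [hx.2]
      rw [hm]; positivity
    · have : Prod.mk x ⁻¹' T = ∅ := by
        ext y
        simp only [Set.mem_preimage, hTdef, Set.mem_setOf_eq, Set.mem_empty_iff_false, iff_false]
        rintro ⟨h1, -⟩; exact hx h1
      rw [this, Set.indicator_of_notMem hx]
      simp
  rw [lintegral_congr hsec, lintegral_indicator measurableSet_Icc,
    ← Measure.restrict_congr_set Ioc_ae_eq_Icc]
  exact lemA N a m (by rw [hm]; positivity) (by rw [hm]; exact min_le_right s a)

theorem lintegral_range_cube (n : ℕ) (hn : 2 ≤ n) (a : ℝ) (ha : 0 < a)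
    (f : ℝ → ℝ≥0∞) (hf : Measurable f) :
    ∫⁻ v in {v : Fin n → ℝ | ∀ i, v i ∈ Set.Icc 0 a},
        f ((⨆ i, v i) - ⨅ i, v i)
      = ((n * (n - 1) : ℕ) : ℝ≥0∞)
          * ∫⁻ t in Set.Ioc (0 : ℝ) a, ENNReal.ofReal (t ^ (n - 2) * (a - t)) * f t := by
  obtain ⟨K, rfl⟩ : ∃ K, n = K + 2 := ⟨n - 2, by omega⟩
  have e1 : K + 2 - 2 = K := by omega
  have e2 : K + 2 - 1 = K + 1 := by omega
  rw [e1, e2]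
  have h0a : (0:ℝ) ≤ a := ha.le
  have hR : Measurable fun v : Fin (K+2) → ℝ => (⨆ i, v i) - ⨅ i, v i :=
    (Measurable.iSup fun i => measurable_pi_apply i).sub
      (Measurable.iInf fun i => measurable_pi_apply i)
  set C : Set (Fin (K+2) → ℝ) := {v | ∀ i, v i ∈ Set.Icc 0 a} with hCdef
  have hCpi : C = Set.pi Set.univ (fun _ => Set.Icc 0 a) := by
    ext v; simp [hCdef, Set.mem_pi, Pi.le_def, forall_and]
  have hCfin : volume C < ⊤ := by
    rw [hCpi, volume_pi_pi]
    simp only [Real.volume_Icc, sub_zero, Finset.prod_const]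
    exact ENNReal.pow_lt_top ENNReal.ofReal_lt_top
  set g : ℝ → ℝ≥0∞ := fun t => ENNReal.ofReal (t ^ K * (a - t)) with hgdef
  have hg : Measurable g :=
    ((measurable_id.pow_const K).mul (measurable_const.sub measurable_id)).ennreal_ofReal
  set ν : Measure ℝ :=
    (((K + 2) * (K + 1) : ℕ) : ℝ≥0∞) • ((volume.restrict (Set.Ioc 0 a)).withDensity g) with hνdef
  have key : Measure.map (fun v : Fin (K+2) → ℝ => (⨆ i, v i) - ⨅ i, v i)
      (volume.restrict C) = ν := by
    have hfin : IsFiniteMeasure (Measure.map (fun v : Fin (K+2) → ℝ => (⨆ i, v i) - ⨅ i, v i)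
        (volume.restrict C)) := by
      constructor
      rw [Measure.map_apply hR MeasurableSet.univ, Set.preimage_univ,
        Measure.restrict_apply MeasurableSet.univ, Set.univ_inter]
      exact hCfin
    refine Measure.ext_of_Iic _ _ fun s => ?_
    rw [Measure.map_apply hR measurableSet_Iic, Measure.restrict_apply (hR measurableSet_Iic)]
    have hν : ν (Set.Iic s)
        = (((K + 2) * (K + 1) : ℕ) : ℝ≥0∞) * ∫⁻ t in Set.Ioc (0:ℝ) (min s a), g t := by
      rw [hνdef, Measure.smul_apply, smul_eq_mul,
        withDensity_apply _ measurableSet_Iic, Measure.restrict_restrict measurableSet_Iic]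
      have hseteq : Set.Iic s ∩ Set.Ioc (0:ℝ) a = Set.Ioc 0 (min s a) := by
        ext t
        simp only [Set.mem_inter_iff, Set.mem_Iic, Set.mem_Ioc, le_min_iff]
        tauto
      rw [hseteq]
    rw [hν]
    rcases lt_or_ge s 0 with hs | hs
    · have h1 : (fun v : Fin (K+2) → ℝ => (⨆ i, v i) - ⨅ i, v i) ⁻¹' Set.Iic s ∩ C = ∅ := by
        ext v
        simp only [Set.mem_inter_iff, Set.mem_preimage, Set.mem_Iic, Set.mem_empty_iff_false,
          iff_false, not_and]
        intro hv _
        have hb1 : BddAbove (Set.range v) := (Set.finite_range v).bddAbove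
        have hb2 : BddBelow (Set.range v) := (Set.finite_range v).bddBelow
        have h2 : (⨅ i, v i) ≤ v 0 := ciInf_le hb2 0
        have h3 : v 0 ≤ ⨆ i, v i := le_ciSup hb1 0
        linarith
      have h2 : Set.Ioc (0:ℝ) (min s a) = ∅ :=
        Set.Ioc_eq_empty (by simp only [not_lt]; exact (min_le_left s a).trans hs.le)
      rw [h1, h2]
      simp
    · set m := min s a with hmdef
      have hm0 : 0 ≤ m := le_min hs h0a
      have hma : m ≤ a := min_le_right _ _
      set B : Fin (K+2) → Set (Fin (K+2) → ℝ) := fun i =>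
        {v | v i ∈ Set.Icc 0 a ∧ ∀ j, j ≠ i → v j ∈ Set.Ioc (v i) (min (v i + s) a)} with hBdef
      have hBmeas : ∀ i, MeasurableSet (B i) := by
        intro i
        simp only [hBdef]
        rw [Set.setOf_and]
        apply MeasurableSet.inter
        · exact measurable_pi_apply i measurableSet_Icc
        · rw [Set.setOf_forall]
          refine MeasurableSet.iInter fun j => ?_
          by_cases hj : j = i
          · simp [hj]
          · simp only [hj, ne_eq, not_false_iff, true_implies]
            exact (measurableSet_lt (measurable_pi_apply i) (measurable_pi_apply j)).inter
              (measurableSet_le (measurable_pi_apply j)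
                (by fun_prop))
      have hBdisj : Pairwise (Function.onFun Disjoint B) := by
        intro i j hij
        rw [Function.onFun, Set.disjoint_left]
        intro v hvi hvj
        have l1 : v i < v j := (hvi.2 j (Ne.symm hij)).1
        have l2 : v j < v i := (hvj.2 i hij).1
        exact absurd l1 (not_lt.mpr l2.le)
      have hBsub : (⋃ i, B i) ⊆
          (fun v : Fin (K+2) → ℝ => (⨆ i, v i) - ⨅ i, v i) ⁻¹' Set.Iic s ∩ C := by
        rintro v ⟨_, ⟨i, rfl⟩, hv⟩
        have hvi := hv.1
        have hub : ∀ j, v j ≤ v i + s := by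
          intro j
          by_cases hj : j = i
          · subst hj; linarith
          · exact (hv.2 j hj).2.trans (min_le_left _ _)
        have hlb : ∀ j, v i ≤ v j := by
          intro j
          by_cases hj : j = i
          · subst hj; exact le_refl _
          · exact ((hv.2 j hj).1).le
        constructor
        · have h1 : (⨆ j, v j) ≤ v i + s := ciSup_le hub
          have h2 : v i ≤ ⨅ j, v j := le_ciInf hlb
          simp only [Set.mem_preimage, Set.mem_Iic]
          linarith
        · intro j
          by_cases hj : j = i
          · subst hj; exact hvi
          · exact ⟨hvi.1.trans (hv.2 j hj).1.le, (hv.2 j hj).2.trans (min_le_right _ _)⟩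
      have hDnull : (volume : Measure (Fin (K+2) → ℝ))
          (⋃ j, ⋃ k, {v : Fin (K+2) → ℝ | j ≠ k ∧ v j = v k}) = 0 := by
        refine measure_iUnion_null fun j => measure_iUnion_null fun k => ?_
        by_cases hjk : j = k
        · subst hjk; simp
        · exact measure_mono_null (fun v hv => hv.2) (hyperplane_null (K+1) j k hjk)
      have hAsub : ((fun v : Fin (K+2) → ℝ => (⨆ i, v i) - ⨅ i, v i) ⁻¹' Set.Iic s ∩ C)
          ⊆ (⋃ i, B i) ∪ (⋃ j, ⋃ k, {v : Fin (K+2) → ℝ | j ≠ k ∧ v j = v k}) := by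
        intro v hv
        by_cases hdist : ∃ j k, j ≠ k ∧ v j = v k
        · right
          obtain ⟨j, k, h1, h2⟩ := hdist
          exact Set.mem_iUnion.mpr ⟨j, Set.mem_iUnion.mpr ⟨k, ⟨h1, h2⟩⟩⟩
        · left
          push_neg at hdist
          obtain ⟨i, hi⟩ := Finite.exists_min v
          refine Set.mem_iUnion.mpr ⟨i, ?_⟩
          have hvC := hv.2
          have hvR : (⨆ j, v j) - (⨅ j, v j) ≤ s := hv.1
          have hb1 : BddAbove (Set.range v) := (Set.finite_range v).bddAbove
          have hb2 : BddBelow (Set.range v) := (Set.finite_range v).bddBelow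
          refine ⟨hvC i, fun j hj => ?_⟩
          constructor
          · exact lt_of_le_of_ne (hi j) (hdist i j (Ne.symm hj))
          · refine le_min ?_ (hvC j).2
            have l1 : v j ≤ ⨆ k, v k := le_ciSup hb1 j
            have l2 : (⨅ k, v k) ≤ v i := ciInf_le hb2 i
            linarith
      have hvol : volume ((fun v : Fin (K+2) → ℝ => (⨆ i, v i) - ⨅ i, v i) ⁻¹' Set.Iic s ∩ C)
          = volume (⋃ i, B i) := by
        refine le_antisymm ?_ (measure_mono hBsub)
        calc volume ((fun v : Fin (K+2) → ℝ => (⨆ i, v i) - ⨅ i, v i) ⁻¹' Set.Iic s ∩ C)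
            ≤ volume ((⋃ i, B i) ∪ (⋃ j, ⋃ k, {v : Fin (K+2) → ℝ | j ≠ k ∧ v j = v k})) :=
              measure_mono hAsub
          _ ≤ volume (⋃ i, B i)
              + volume (⋃ j, ⋃ k, {v : Fin (K+2) → ℝ | j ≠ k ∧ v j = v k}) :=
              measure_union_le _ _
          _ = volume (⋃ i, B i) := by rw [hDnull, add_zero]
      rw [hvol, measure_iUnion hBdisj hBmeas]
      have hslab : ∀ i : Fin (K+2), volume (B i)
          = ENNReal.ofReal ((a - m) * m ^ (K+1) + m ^ (K+1+1) / (((K+1 : ℕ) : ℝ) + 1)) := by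
        intro i
        exact vol_slab (K+1) i a s m h0a hs hmdef
      simp only [hslab]
      rw [tsum_fintype, Finset.sum_const, Finset.card_univ, Fintype.card_fin, nsmul_eq_mul]
      simp only [hgdef]
      rw [lemA' K a m hm0 hma]
      rw [← ENNReal.ofReal_natCast (K+2), ← ENNReal.ofReal_natCast ((K+2)*(K+1)),
        ← ENNReal.ofReal_mul (by positivity), ← ENNReal.ofReal_mul (by positivity)]
      congr 1
      have hk1 : ((K:ℝ) + 1) ≠ 0 := by positivity
      have hk2 : ((K:ℝ) + 2) ≠ 0 := by positivity
      push_cast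
      field_simp
      ring
  calc ∫⁻ v in C, f ((⨆ i, v i) - ⨅ i, v i)
      = ∫⁻ x, f x ∂(Measure.map (fun v : Fin (K+2) → ℝ => (⨆ i, v i) - ⨅ i, v i)
          (volume.restrict C)) := (lintegral_map hf hR).symm
    _ = ∫⁻ x, f x ∂ν := by rw [key]
    _ = (((K + 2) * (K + 1) : ℕ) : ℝ≥0∞)
          * ∫⁻ t in Set.Ioc (0 : ℝ) a, ENNReal.ofReal (t ^ K * (a - t)) * f t := by
        rw [hνdef, lintegral_smul_measure,
          lintegral_withDensity_eq_lintegral_mul _ hg hf]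
        rfl
end

section
/- Let n ≥ 1 be a natural number, let δ > 0, and let f : ℝ → [0, ∞] be a measurable function. Then, with respect to Lebesgue measure on (ℝ²)ⁿ, ∫_{D(δ)ⁿ} f(max_i ‖x_i‖) dx = 2·n·πⁿ·∫₀^δ t^{2n−1}·f(t) dt, where D(δ) is the closed disk of radius δ centered at the origin of the Euclidean plane ℝ² and x = (x₁, …, x_n) with each x_i ∈ D(δ). -/
open MeasureTheory
open scoped ENNReal

theorem lintegral_max_norm_disks (n : ℕ) (hn : 1 ≤ n) (δ : ℝ) (hδ : 0 < δ)
    (f : ℝ → ℝ≥0∞) (hf : Measurable f) :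
    ∫⁻ x in {x : Fin n → EuclideanSpace ℝ (Fin 2) |
        ∀ i, x i ∈ Metric.closedBall (0 : EuclideanSpace ℝ (Fin 2)) δ},
        f (⨆ i, ‖x i‖)
      = ENNReal.ofReal (2 * n * Real.pi ^ n)
          * ∫⁻ t in Set.Ioc (0 : ℝ) δ, ENNReal.ofReal (t ^ (2 * n - 1)) * f t := by
  haveI : Nonempty (Fin n) := ⟨⟨0, hn⟩⟩
  set E := EuclideanSpace ℝ (Fin 2)
  have hball : ∀ r : ℝ, volume (Metric.closedBall (0 : E) r)
      = ENNReal.ofReal r ^ 2 * ENNReal.ofReal Real.pi := by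
    intro r
    rw [EuclideanSpace.volume_closedBall]
    norm_num [Real.Gamma_two, Real.sq_sqrt Real.pi_pos.le]
  set C : ℝ := 2 * n * Real.pi ^ n with hC
  have hCpos : 0 < C := by
    have := Real.pi_pos
    have : (0:ℝ) < n := by exact_mod_cast hn
    positivity
  set g : (Fin n → E) → ℝ := fun x => ⨆ i, ‖x i‖ with hgdef
  have hgm : Measurable g := Measurable.iSup fun i => (measurable_pi_apply i).norm
  set S : Set (Fin n → E) :=
    {x : Fin n → E | ∀ i, x i ∈ Metric.closedBall (0 : E) δ} with hSdef
  have hprod : ∀ r : ℝ, volume {x : Fin n → E | ∀ i, x i ∈ Metric.closedBall (0 : E) r}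
      = (ENNReal.ofReal r ^ 2 * ENNReal.ofReal Real.pi) ^ n := by
    intro r
    have h : {x : Fin n → E | ∀ i, x i ∈ Metric.closedBall (0 : E) r}
        = Set.pi Set.univ (fun _ => Metric.closedBall (0 : E) r) := by
      ext x; simp [Set.mem_univ_pi]
    rw [h, volume_pi_pi, hball]
    simp
  set dens : ℝ → ℝ≥0∞ := fun t => ENNReal.ofReal (C * t ^ (2 * n - 1)) with hdens
  have hdensm : Measurable dens :=
    ENNReal.measurable_ofReal.comp ((measurable_id.pow_const _).const_mul C)
  set ρ : Measure ℝ := (volume.restrict (Set.Ioc (0:ℝ) δ)).withDensity dens with hρ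
  set ν : Measure ℝ := Measure.map g (volume.restrict S) with hν
  have hIoc : ∀ m : ℝ, 0 ≤ m → (∫⁻ t in Set.Ioc (0:ℝ) m, dens t)
      = ENNReal.ofReal (Real.pi ^ n * m ^ (2 * n)) := by
    intro m hm
    have hcont : Continuous fun t : ℝ => C * t ^ (2 * n - 1) := continuous_const.mul (continuous_pow _)
    have hint : IntegrableOn (fun t => C * t ^ (2 * n - 1)) (Set.Ioc 0 m) :=
      hcont.integrableOn_Ioc
    rw [hdens, ← ofReal_integral_eq_lintegral_ofReal hint ?pos]
    case pos =>
      filter_upwards [ae_restrict_mem measurableSet_Ioc] with t ht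
      exact mul_nonneg hCpos.le (pow_nonneg ht.1.le _)
    congr 1
    rw [← intervalIntegral.integral_of_le hm, intervalIntegral.integral_const_mul,
      integral_pow]
    have h2n : 2 * n - 1 + 1 = 2 * n := by omega
    rw [h2n, hC]
    have h2n' : ((2 * n - 1 : ℕ) : ℝ) + 1 = 2 * n := by
      push_cast [Nat.cast_sub (by omega : 1 ≤ 2 * n)]; ring
    rw [h2n']
    have hne : (2 * (n:ℝ)) ≠ 0 := by positivity
    field_simp
    ring_nf
    rw [zero_pow (by omega), sub_zero]
  haveI hfinS : IsFiniteMeasure (volume.restrict S) := by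
    constructor
    rw [Measure.restrict_apply_univ, hSdef, hprod δ]
    exact ENNReal.pow_lt_top (ENNReal.mul_lt_top (ENNReal.pow_lt_top ENNReal.ofReal_lt_top) ENNReal.ofReal_lt_top)
  haveI hfinν : IsFiniteMeasure ν := by
    constructor
    rw [hν, Measure.map_apply hgm MeasurableSet.univ]
    exact measure_lt_top _ _
  have hνρ : ν = ρ := by
    refine Measure.ext_of_Iic ν ρ ?_
    intro b
    have hνb : ν (Set.Iic b)
        = volume {x : Fin n → E | ∀ i, x i ∈ Metric.closedBall (0:E) (min b δ)} := by
      rw [hν, Measure.map_apply hgm measurableSet_Iic,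
        Measure.restrict_apply (hgm measurableSet_Iic)]
      congr 1
      ext x
      simp only [Set.mem_inter_iff, Set.mem_preimage, Set.mem_Iic, hSdef, Set.mem_setOf_eq,
        Metric.mem_closedBall, dist_zero_right, le_min_iff, hgdef]
      constructor
      · rintro ⟨hb, hδ'⟩ i
        exact ⟨le_trans (le_ciSup (f := fun i => ‖x i‖) (Set.Finite.bddAbove (Set.finite_range _)) i) hb, hδ' i⟩
      · intro h
        exact ⟨ciSup_le fun i => (h i).1, fun i => (h i).2⟩
    have hρb : ρ (Set.Iic b) = ∫⁻ t in Set.Ioc (0:ℝ) (min b δ), dens t := by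
      rw [hρ, withDensity_apply _ measurableSet_Iic,
        Measure.restrict_restrict measurableSet_Iic]
      congr 2
      ext t
      simp only [Set.mem_inter_iff, Set.mem_Iic, Set.mem_Ioc, le_min_iff]
      tauto
    rcases le_or_gt b 0 with hb | hb
    · rw [hνb, hρb, hprod, Set.Ioc_eq_empty (not_lt.mpr (min_le_of_left_le hb)),
        Measure.restrict_empty, lintegral_zero_measure]
      have h0 : ENNReal.ofReal (min b δ) = 0 := by
        simp [ENNReal.ofReal_eq_zero, min_le_of_left_le hb, hb]
      rw [h0]
      rw [zero_pow (two_ne_zero), zero_mul, zero_pow (by omega : n ≠ 0)]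
    · have hm : 0 ≤ min b δ := le_min hb.le hδ.le
      rw [hνb, hρb, hprod, hIoc _ hm]
      rw [← ENNReal.ofReal_pow hm, ← ENNReal.ofReal_mul (by positivity),
        ← ENNReal.ofReal_pow (by positivity)]
      congr 1
      ring
  calc ∫⁻ x in S, f (g x) = ∫⁻ y, f y ∂ν := (lintegral_map hf hgm).symm
    _ = ∫⁻ y, f y ∂ρ := by rw [hνρ]
    _ = ∫⁻ t in Set.Ioc (0:ℝ) δ, dens t * f t := by
        rw [hρ, lintegral_withDensity_eq_lintegral_mul _ hdensm hf]; rfl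
    _ = ENNReal.ofReal C * ∫⁻ t in Set.Ioc (0:ℝ) δ, ENNReal.ofReal (t ^ (2 * n - 1)) * f t := by
        have hmeas2 : Measurable fun t : ℝ => ENNReal.ofReal (t ^ (2 * n - 1)) * f t :=
          (measurable_id.pow_const _).ennreal_ofReal.mul hf
        simp_rw [hdens, ENNReal.ofReal_mul hCpos.le, mul_assoc]
        rw [lintegral_const_mul _ hmeas2]
end
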